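/- Let f : ℂ∖{0} → ℂ be the Lattès map f(z) = (z + z⁻¹)/(2i), and let z₀ ∈ ℂ satisfy z₀² = 1/(2i − 1) (so z₀ ≠ 0). Then f(z₀) = z₀, the complex derivative f'(z₀) has modulus |f'(z₀)| = √2, and (f'(z₀))⁴ = −4; in particular the multiplier of f⁴ at the fixed point z₀ is the real number −4. -/

import Mathlib

/-- Remark 1.6(c): for the Lattès map `f(z) = (z + z⁻¹)/(2i)` and `z₀` with
`z₀² = 1/(2i − 1)`, the point `z₀` is a nonzero fixed point of `f`, the derivative
`f'(z₀)` has modulus `√2`, and `(f'(z₀))⁴ = −4`, so the multiplier of `f⁴` at `z₀`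
is the real number `−4`. -/
theorem lattes_multiplier (z₀ : ℂ) (h : z₀ ^ 2 = 1 / (2 * Complex.I - 1)) :
    z₀ ≠ 0 ∧
    (z₀ + z₀⁻¹) / (2 * Complex.I) = z₀ ∧
    ∃ d : ℂ, HasDerivAt (fun z : ℂ => (z + z⁻¹) / (2 * Complex.I)) d z₀ ∧
      ‖d‖ = Real.sqrt 2 ∧ d ^ 4 = -4 := by
  have hden : (2 * Complex.I - 1) ≠ 0 := by
    intro hc
    have := congrArg Complex.re hc
    simp at this
  have hz2 : z₀ ^ 2 ≠ 0 := by
    rw [h]; simp [hden]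
  have hz : z₀ ≠ 0 := by
    intro hc; apply hz2; rw [hc]; ring
  have hinv : (z₀ ^ 2)⁻¹ = 2 * Complex.I - 1 := by
    rw [h]; field_simp
  refine ⟨hz, ?_, -1 - Complex.I, ?_, ?_, by
    linear_combination (Complex.I^2 + 4*Complex.I + 5) * Complex.I_sq⟩
  · have hinvz : z₀⁻¹ = (2 * Complex.I - 1) * z₀ := by
      rw [show z₀⁻¹ = z₀ * (z₀ ^ 2)⁻¹ by field_simp, hinv]; ring
    rw [hinvz]
    have h2i : (2 : ℂ) * Complex.I ≠ 0 := by simp [Complex.I_ne_zero]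
    field_simp
    ring
  · have hd := ((hasDerivAt_id z₀).add (hasDerivAt_inv hz)).div_const (2 * Complex.I)
    refine hd.congr_deriv (Eq.symm ?_)
    rw [hinv]
    have hI := Complex.I_ne_zero
    field_simp
    ring_nf
    simp [Complex.I_sq]
    ring
  · have : ‖(-1 - Complex.I)‖ = Real.sqrt 2 := by
      have : (-1 - Complex.I) = Complex.mk (-1) (-1) := by
        apply Complex.ext <;> simp
      rw [this]
      rw [Complex.norm_def, Complex.normSq_mk]
      norm_num
    exact this
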